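/- Let R be a commutative Noetherian integral domain, n a positive integer, and M a finitely generated R[n]-module. Let t_M : M → M^{∨∨} be the canonical evaluation map into the double dual. Then the kernel of t_M equals the torsion submodule T(M) of M. -/

import Mathlib

open Polynomial

noncomputable section

/-- The primitive multiple ring `R[n] = R[t]/(t^n)`. -/
abbrev Rn (R : Type*) [CommRing R] (n : ℕ) : Type _ :=
  Polynomial R ⧸ Ideal.span {(X : Polynomial R) ^ n}

/-- The class `t` of the variable in `R[n]`. -/
def tn (R : Type*) [CommRing R] (n : ℕ) : Rn R n :=
  Ideal.Quotient.mk _ X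

/-- `R[k] = R[n]/(t^k)` as an `R[n]`-module (for `k ≤ n` this is `R[t]/(t^k)`
with the `R[n]`-module structure coming from the natural surjection `R[n] → R[k]`). -/
abbrev Rmod (R : Type*) [CommRing R] (n k : ℕ) : Type _ :=
  Rn R n ⧸ (Ideal.span {tn R n ^ k})

/-- The constant term homomorphism `R[n] → R` (for `n > 0`). -/
def ct (R : Type*) [CommRing R] (n : ℕ) (hn : 0 < n) : Rn R n →+* R :=
  Ideal.Quotient.lift _ (evalRingHom 0) (by
    intro a ha
    rw [Ideal.mem_span_singleton] at ha
    obtain ⟨c, rfl⟩ := ha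
    simp [zero_pow hn.ne'])

section Modules

variable (R : Type*) [CommRing R] (n : ℕ) (M : Type*) [AddCommGroup M] [Module (Rn R n) M]

/-- The submodule `M_i = t^i M` of an `R[n]`-module `M`. -/
def tMi (i : ℕ) : Submodule (Rn R n) M :=
  LinearMap.range (LinearMap.lsmul (Rn R n) M (tn R n ^ i))

/-- The submodule `M^{(i)} = {m ∈ M : t^i m = 0}` of an `R[n]`-module `M`. -/
def kt (i : ℕ) : Submodule (Rn R n) M :=
  LinearMap.ker (LinearMap.lsmul (Rn R n) M (tn R n ^ i))

/-- `G_i(M) = t^i M / t^{i+1} M`. -/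
abbrev Gi (i : ℕ) :=
  (tMi R n M i) ⧸ (Submodule.comap (tMi R n M i).subtype (tMi R n M (i + 1)))

/-- `G^{(i+1)}(M) = M^{(i+1)}/M^{(i)}` (note the shift by one in the indexing:
`Gup R n M i` is `G^{(i+1)}(M)`). -/
abbrev Gup (i : ℕ) :=
  (kt R n M (i + 1)) ⧸ (Submodule.comap (kt R n M (i + 1)).subtype (kt R n M i))

lemma tMi_succ_mem {i : ℕ} {x : M} (hx : x ∈ tMi R n M i) :
    tn R n • x ∈ tMi R n M (i + 1) := by
  obtain ⟨m, rfl⟩ := hx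
  exact ⟨m, by simp [LinearMap.lsmul_apply, smul_smul, pow_succ']⟩

lemma kt_pred_mem {i : ℕ} {x : M} (hx : x ∈ kt R n M (i + 1)) :
    tn R n • x ∈ kt R n M i := by
  simp only [kt, LinearMap.mem_ker, LinearMap.lsmul_apply] at hx ⊢
  rw [smul_smul, ← pow_succ]
  exact hx

/-- `μ_i : G_i(M) → G_{i+1}(M)`, induced by multiplication by `t`. -/
def muMap (i : ℕ) : Gi R n M i →ₗ[Rn R n] Gi R n M (i + 1) :=
  Submodule.mapQ _ _
    (LinearMap.restrict (LinearMap.lsmul (Rn R n) M (tn R n))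
      (fun _ hx => tMi_succ_mem R n M hx))
    (fun x hx => by
      simp only [Submodule.mem_comap] at hx ⊢
      exact tMi_succ_mem R n M hx)

/-- `λ_{i+1} : G^{(i+2)}(M) → G^{(i+1)}(M)`, induced by multiplication by `t`
(with the shifted indexing, `lamMap R n M i : Gup (i+1) → Gup i`). -/
def lamMap (i : ℕ) : Gup R n M (i + 1) →ₗ[Rn R n] Gup R n M i :=
  Submodule.mapQ _ _
    (LinearMap.restrict (LinearMap.lsmul (Rn R n) M (tn R n))
      (fun _ hx => kt_pred_mem R n M hx))
    (fun x hx => by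
      simp only [Submodule.mem_comap] at hx ⊢
      exact kt_pred_mem R n M hx)

/-- The composition `μ_{k-1} ∘ ... ∘ μ_0 : G_0(M) → G_k(M)`. -/
def muComp : (k : ℕ) → (Gi R n M 0 →ₗ[Rn R n] Gi R n M k)
  | 0 => LinearMap.id
  | (k + 1) => (muMap R n M k).comp (muComp k)

/-- The composition `λ_1 ∘ ... ∘ λ_k : G^{(k+1)}(M) → G^{(1)}(M)`. -/
def lamComp : (k : ℕ) → (Gup R n M k →ₗ[Rn R n] Gup R n M 0)
  | 0 => LinearMap.id
  | (k + 1) => (lamComp k).comp (lamMap R n M k)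

end Modules

section Base
variable {R : Type*} [CommRing R] [IsDomain R] {n : ℕ}

set_option linter.unusedSectionVars false

lemma Rn.mk_eq_zero {p : Polynomial R} :
    Ideal.Quotient.mk (Ideal.span {(X : Polynomial R) ^ n}) p = 0 ↔ X ^ n ∣ p := by
  rw [Ideal.Quotient.eq_zero_iff_mem, Ideal.mem_span_singleton]

lemma Rn.tpow_ne {k : ℕ} (hk : k < n) : (tn R n) ^ k ≠ 0 := by
  intro h
  rw [tn, ← map_pow, Rn.mk_eq_zero, X_pow_dvd_iff] at h
  simpa using h k hk

lemma Rn.const_nzd {c : R} (hc : c ≠ 0) :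
    (Ideal.Quotient.mk (Ideal.span {(X : Polynomial R) ^ n}) (C c)) ∈
      nonZeroDivisors (Rn R n) := by
  rw [mem_nonZeroDivisors_iff_right]
  intro x hx
  obtain ⟨p, rfl⟩ := Ideal.Quotient.mk_surjective x
  rw [← map_mul, Rn.mk_eq_zero, X_pow_dvd_iff] at hx
  rw [Rn.mk_eq_zero, X_pow_dvd_iff]
  intro d hd
  have := hx d hd
  rw [coeff_mul_C] at this
  exact (mul_eq_zero.mp this).resolve_right hc

lemma Rn.coeff_zero_ne_of_nzd {p : Polynomial R} (hn : 0 < n)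
    (hp : (Ideal.Quotient.mk (Ideal.span {(X : Polynomial R) ^ n}) p) ∈
      nonZeroDivisors (Rn R n)) : p.coeff 0 ≠ 0 := by
  intro h0
  have hX : (X : Polynomial R) ∣ p := X_dvd_iff.mpr h0
  have : (Ideal.Quotient.mk (Ideal.span {(X : Polynomial R) ^ n}) p) * (tn R n) ^ (n-1) = 0 := by
    rw [tn, ← map_pow, ← map_mul, Rn.mk_eq_zero]
    obtain ⟨q, rfl⟩ := hX
    calc (X : Polynomial R) ^ n ∣ X ^ n * q := Dvd.intro _ rfl
    _ = X * q * X ^ (n-1) := by rw [← pow_sub_one_mul hn.ne' X]; ring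
  exact Rn.tpow_ne (Nat.sub_lt hn one_pos) ((mem_nonZeroDivisors_iff_right.mp hp) _ (by rwa [mul_comm] at this))

end Base

section Kpart

variable {K : Type*} [Field K] {n : ℕ}

lemma Rn.mk_mem_span_t_pow {p : Polynomial K} {k : ℕ} (h : (X:Polynomial K)^k ∣ p) :
    Ideal.Quotient.mk (Ideal.span {(X : Polynomial K) ^ n}) p ∈
      Ideal.span {(tn K n) ^ k} := by
  obtain ⟨q, rfl⟩ := h
  rw [Ideal.mem_span_singleton, tn, ← map_pow]
  exact ⟨Ideal.Quotient.mk _ q, by rw [← map_mul]⟩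

lemma Rn.isUnit_of_coeff_ne {p : Polynomial K} (hp : p.coeff 0 ≠ 0) :
    IsUnit (Ideal.Quotient.mk (Ideal.span {(X : Polynomial K) ^ n}) p) := by
  set c := p.coeff 0 with hc
  have h1 : IsUnit (Ideal.Quotient.mk (Ideal.span {(X : Polynomial K) ^ n}) (C c)) := by
    refine IsUnit.of_mul_eq_one (Ideal.Quotient.mk _ (C c⁻¹)) ?_
    rw [← map_mul, ← map_mul, mul_inv_cancel₀ hp, map_one, map_one]
  have h2 : IsNilpotent (Ideal.Quotient.mk (Ideal.span {(X : Polynomial K) ^ n}) (p - C c)) := by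
    refine ⟨n, ?_⟩
    rw [← map_pow, Rn.mk_eq_zero]
    have hX : (X : Polynomial K) ∣ p - C c := X_dvd_iff.mpr (by simp [hc])
    exact pow_dvd_pow_of_dvd hX n
  have := h2.isUnit_add_left_of_commute h1 (Commute.all _ _)
  rwa [← map_add, add_sub_cancel] at this

/-- every non-unit is in (t) -/
lemma Rn.mem_span_t_of_not_isUnit {b : Rn K n} (hb : ¬ IsUnit b) :
    b ∈ Ideal.span {tn K n} := by
  obtain ⟨p, rfl⟩ := Ideal.Quotient.mk_surjective b
  by_cases h0 : p.coeff 0 = 0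
  · simpa using Rn.mk_mem_span_t_pow (k := 1) (by simpa using X_dvd_iff.mpr h0)
  · exact absurd (Rn.isUnit_of_coeff_ne h0) hb

/-- annihilator lemma : t^(n-k) * b = 0 → b ∈ (t^k), for k ≤ n -/
lemma Rn.mem_span_of_ann {b : Rn K n} {k : ℕ} (hk : k ≤ n)
    (h : (tn K n) ^ (n - k) * b = 0) : b ∈ Ideal.span {(tn K n) ^ k} := by
  obtain ⟨p, rfl⟩ := Ideal.Quotient.mk_surjective b
  rw [tn, ← map_pow, ← map_mul, Rn.mk_eq_zero] at h
  refine Rn.mk_mem_span_t_pow ?_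
  have hcancel : (X:Polynomial K) ^ (n-k) * X ^ k ∣ X ^ (n-k) * p := by
    rwa [← pow_add, Nat.sub_add_cancel hk]
  exact (mul_dvd_mul_iff_left (a := (X:Polynomial K) ^ (n-k)) (pow_ne_zero _ X_ne_zero)).mp hcancel

/-- classification of ideals of K[t]/(t^n) -/
lemma Rn.ideal_eq (I : Ideal (Rn K n)) : ∃ k, I = Ideal.span {(tn K n) ^ k} := by
  set mk := Ideal.Quotient.mk (Ideal.span {(X : Polynomial K) ^ n})
  set J := I.comap mk with hJ
  have hJp : Submodule.IsPrincipal J := inferInstance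
  obtain ⟨g, hg⟩ := hJp
  have hXn : (X : Polynomial K) ^ n ∈ J := by
    simp only [hJ, Ideal.mem_comap]
    simp [mk, Rn.mk_eq_zero]
  have hdvd : g ∣ X ^ n := by
    rw [hg, Ideal.submodule_span_eq, Ideal.mem_span_singleton] at hXn; exact hXn
  obtain ⟨k, hk, hassoc⟩ := (dvd_prime_pow prime_X n).mp hdvd
  refine ⟨k, ?_⟩
  have hI : I = J.map mk := (Ideal.map_comap_of_surjective mk Ideal.Quotient.mk_surjective I).symm
  rw [hI, hg, Ideal.submodule_span_eq,
    Ideal.span_singleton_eq_span_singleton.mpr hassoc, Ideal.map_span]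
  simp [mk, tn, Set.image_singleton]

end Kpart

section Rpart

variable (R : Type*) [CommRing R] [IsDomain R] (n : ℕ)

def RnMap : Rn R n →+* Rn (FractionRing R) n :=
  Ideal.Quotient.lift _
    ((Ideal.Quotient.mk _).comp (mapRingHom (algebraMap R (FractionRing R))))
    (by
      intro a ha
      rw [Ideal.mem_span_singleton] at ha
      obtain ⟨c, rfl⟩ := ha
      simp only [RingHom.comp_apply, map_mul, coe_mapRingHom, Polynomial.map_pow, map_X]
      rw [Rn.mk_eq_zero.mpr dvd_rfl, zero_mul])

variable {R n} in
lemma RnMap_mk (p : Polynomial R) :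
    RnMap R n (Ideal.Quotient.mk _ p)
      = Ideal.Quotient.mk _ (p.map (algebraMap R (FractionRing R))) := rfl

variable {R n} in
lemma RnMap_injective : Function.Injective (RnMap R n) := by
  rw [injective_iff_map_eq_zero]
  intro a ha
  obtain ⟨p, rfl⟩ := Ideal.Quotient.mk_surjective a
  rw [RnMap_mk, Rn.mk_eq_zero, X_pow_dvd_iff] at ha
  rw [Rn.mk_eq_zero, X_pow_dvd_iff]
  intro d hd
  have := ha d hd
  rw [coeff_map] at this
  exact IsFractionRing.injective R (FractionRing R) (by simpa using this)

end Rpart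

section Loc
variable (R : Type*) [CommRing R] [IsDomain R] (n : ℕ)

instance algRK : Algebra (Rn R n) (Rn (FractionRing R) n) := (RnMap R n).toAlgebra

variable {R n} in
lemma algebraMap_RnK_eq : (algebraMap (Rn R n) (Rn (FractionRing R) n)) = RnMap R n := rfl

lemma Rn.isLoc (hn : 0 < n) :
    IsLocalization (nonZeroDivisors (Rn R n)) (Rn (FractionRing R) n) := by
  constructor
  constructor
  · rintro ⟨s, hs⟩
    obtain ⟨p, rfl⟩ := Ideal.Quotient.mk_surjective s
    have hc : p.coeff 0 ≠ 0 := Rn.coeff_zero_ne_of_nzd hn hs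
    show IsUnit (RnMap R n _)
    rw [RnMap_mk]
    apply Rn.isUnit_of_coeff_ne
    rw [coeff_map]
    exact fun h => hc (IsFractionRing.injective R (FractionRing R) (by simpa using h))
  · intro z
    obtain ⟨q, rfl⟩ := Ideal.Quotient.mk_surjective z
    obtain ⟨b, hb⟩ := IsLocalization.integerNormalization_map_to_map (nonZeroDivisors R) q
    refine ⟨⟨Ideal.Quotient.mk _ (IsLocalization.integerNormalization (nonZeroDivisors R) q),
      ⟨Ideal.Quotient.mk _ (C (b : R)), Rn.const_nzd (nonZeroDivisors.ne_zero b.2)⟩⟩, ?_⟩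
    show _ * RnMap R n _ = RnMap R n _
    rw [RnMap_mk, RnMap_mk, hb, ← map_mul]
    congr 1
    rw [map_C, ← IsScalarTower.algebraMap_smul (FractionRing R) (b : R) q, smul_eq_C_mul]
    ring
  · intro x y h
    exact ⟨1, by simpa using RnMap_injective h⟩
end Loc

section Baer
variable {K : Type*} [Field K] {n : ℕ}

lemma Rn.tpow_n (K : Type*) [Field K] (n : ℕ) : (tn K n) ^ n = 0 := by
  rw [tn, ← map_pow]; exact Rn.mk_eq_zero.mpr dvd_rfl

lemma Rn.baer : Module.Baer (Rn K n) (Rn K n) := by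
  intro I g
  obtain ⟨k, rfl⟩ := Rn.ideal_eq I
  by_cases hk : n ≤ k
  · have hτ : (tn K n) ^ k = 0 := by
      calc (tn K n)^k = (tn K n)^n * (tn K n)^(k-n) := by
            rw [← pow_add, Nat.add_sub_cancel' hk]
      _ = 0 := by rw [Rn.tpow_n, zero_mul]
    refine ⟨0, fun x mem => ?_⟩
    have hx0 : x = 0 := by
      rw [hτ, Ideal.span_singleton_eq_bot.mpr rfl] at mem
      simpa using mem
    have : (⟨x, mem⟩ : (Ideal.span {(tn K n)^k})) = 0 := Subtype.ext hx0
    rw [this, g.map_zero, LinearMap.zero_apply]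
  · push_neg at hk
    set a := g ⟨(tn K n)^k, Ideal.mem_span_singleton_self _⟩ with ha
    have hann : (tn K n)^(n-k) * a = 0 := by
      have h1 : ((tn K n)^(n-k) • (⟨(tn K n)^k, Ideal.mem_span_singleton_self _⟩ :
          Ideal.span {(tn K n)^k})) = 0 := by
        apply Subtype.ext
        show (tn K n)^(n-k) • (tn K n)^k = 0
        rw [smul_eq_mul, ← pow_add, Nat.sub_add_cancel hk.le, Rn.tpow_n]
      calc (tn K n)^(n-k) * a = (tn K n)^(n-k) • a := (smul_eq_mul _ _).symm
        _ = g ((tn K n)^(n-k) • ⟨(tn K n)^k, Ideal.mem_span_singleton_self _⟩) := (g.map_smul _ _).symm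
        _ = 0 := by rw [h1, g.map_zero]
    obtain ⟨b, hb⟩ := Ideal.mem_span_singleton.mp (Rn.mem_span_of_ann hk.le hann)
    refine ⟨LinearMap.toSpanSingleton _ _ b, fun x mem => ?_⟩
    obtain ⟨c, hc⟩ := Ideal.mem_span_singleton.mp mem
    have hxc : (⟨x, mem⟩ : (Ideal.span {(tn K n)^k})) =
        c • ⟨(tn K n)^k, Ideal.mem_span_singleton_self _⟩ :=
      Subtype.ext (by show x = c • (tn K n)^k; rw [smul_eq_mul, hc]; ring)
    rw [hxc, g.map_smul, ← ha, LinearMap.toSpanSingleton_apply]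
    show x • b = c • a
    rw [smul_eq_mul, smul_eq_mul, hb, hc]; ring
end Baer


set_option synthInstance.maxHeartbeats 1000000 in
set_option maxHeartbeats 1000000 in
/-- The kernel of the canonical map `t_M : M → M^{∨∨}` of a finitely generated
`R[n]`-module `M` into its double dual is the torsion submodule of `M`. -/
theorem ker_eval_eq_torsion
    {R : Type*} [CommRing R] [IsDomain R] [IsNoetherianRing R]
    (n : ℕ) (hn : 0 < n)
    (M : Type*) [AddCommGroup M] [Module (Rn R n) M] [Module.Finite (Rn R n) M] :
    LinearMap.ker (Module.Dual.eval (Rn R n) M) = Submodule.torsion (Rn R n) M := by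
  classical
  set A := Rn R n with hA
  set K := FractionRing R with hK
  set B := Rn K n with hB
  haveI : IsLocalization (nonZeroDivisors A) B := Rn.isLoc R n hn
  set S := nonZeroDivisors A with hS
  apply le_antisymm
  · -- ker ⊆ torsion
    intro m hm
    by_contra hmt
    set MS := LocalizedModule S M with hMS
    set x : MS := LocalizedModule.mkLinearMap S M m with hx'
    have hx : x ≠ 0 := by
      intro h
      apply hmt
      rw [Submodule.mem_torsion_iff]
      have h' : LocalizedModule.mk m (1 : S) = LocalizedModule.mk (0 : M) (1 : S) := by
        rw [LocalizedModule.zero_mk]; exact h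
      rw [LocalizedModule.mk_eq] at h'
      obtain ⟨u, hu⟩ := h'
      exact ⟨u, by simpa using hu⟩
    letI : Module B MS := LocalizedModule.moduleOfIsLocalization
    set toSpan := LinearMap.toSpanSingleton B MS x with htoSpan
    have hτ : (tn K n) ^ (n - 1) ≠ 0 := Rn.tpow_ne (Nat.sub_lt hn one_pos)
    have hker : LinearMap.ker toSpan ≤
        LinearMap.ker (LinearMap.toSpanSingleton B B ((tn K n) ^ (n - 1))) := by
      intro a hA'
      rw [LinearMap.mem_ker, LinearMap.toSpanSingleton_apply] at hA' ⊢
      by_cases hu : IsUnit a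
      · exfalso
        obtain ⟨u, rfl⟩ := hu
        apply hx
        have := congrArg (fun y => ((u⁻¹ : Bˣ) : B) • y) hA'
        simpa [← mul_smul] using this
      · obtain ⟨c, hc⟩ := Ideal.mem_span_singleton.mp (Rn.mem_span_t_of_not_isUnit hu)
        rw [smul_eq_mul, hc]
        calc tn K n * c * (tn K n) ^ (n - 1) = c * ((tn K n) ^ (n - 1) * tn K n) := by ring
          _ = c * (tn K n) ^ n := by rw [← pow_succ, Nat.sub_add_cancel hn]
          _ = 0 := by rw [Rn.tpow_n, mul_zero]
    set ψ0 : LinearMap.range toSpan →ₗ[B] B :=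
      (Submodule.liftQ _ (LinearMap.toSpanSingleton B B ((tn K n) ^ (n - 1))) hker) ∘ₗ
        (toSpan.quotKerEquivRange.symm : LinearMap.range toSpan →ₗ[B] _) with hψ0def
    have hxmem : x ∈ LinearMap.range toSpan := ⟨1, one_smul _ _⟩
    have hψ0 : ψ0 ⟨x, hxmem⟩ = (tn K n) ^ (n - 1) := by
      have h1 : toSpan.quotKerEquivRange.symm ⟨x, hxmem⟩ =
          Submodule.Quotient.mk (1 : B) := by
        apply toSpan.quotKerEquivRange.injective
        rw [LinearEquiv.apply_symm_apply]
        apply Subtype.ext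
        rw [LinearMap.quotKerEquivRange_apply_mk]
        exact (one_smul _ _).symm
      rw [hψ0def, LinearMap.comp_apply]
      erw [h1]
      rw [Submodule.liftQ_apply, LinearMap.toSpanSingleton_apply, one_smul]
    obtain ⟨ψ, hψ⟩ := (Rn.baer (K := K) (n := n)).extension_property
      (LinearMap.range toSpan).subtype (Submodule.injective_subtype _) ψ0
    have hψx : ψ x = (tn K n) ^ (n - 1) := by
      have := LinearMap.congr_fun hψ ⟨x, hxmem⟩
      simpa [hψ0] using this
    set φ0 : M →ₗ[A] B := (ψ.restrictScalars A) ∘ₗ (LocalizedModule.mkLinearMap S M)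
      with hφ0def
    obtain ⟨Tset, hTspan⟩ := Module.Finite.fg_top (R := A) (M := M)
    obtain ⟨b, hb⟩ := IsLocalization.exist_integer_multiples S Tset (fun g => φ0 g)
    set φ1 : M →ₗ[A] B := (b : A) • φ0 with hφ1def
    set j : A →ₗ[A] B := Algebra.linearMap A B with hjdef
    have hjinj : Function.Injective j := IsLocalization.injective B (le_refl S)
    have hrange : ∀ y, φ1 y ∈ LinearMap.range j := by
      have hle : LinearMap.range φ1 ≤ LinearMap.range j := by
        rw [LinearMap.range_eq_map, ← hTspan, Submodule.map_span, Submodule.span_le]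
        rintro _ ⟨g, hg, rfl⟩
        obtain ⟨r, hr⟩ := hb g hg
        exact ⟨r, hr⟩
      intro y; exact hle ⟨y, rfl⟩
    set φ : M →ₗ[A] A := ((LinearEquiv.ofInjective j hjinj).symm : LinearMap.range j →ₗ[A] A) ∘ₗ
      (φ1.codRestrict (LinearMap.range j) hrange) with hφdef
    have hφm : j (φ m) = φ1 m := by
      have h2 := LinearEquiv.apply_symm_apply (LinearEquiv.ofInjective j hjinj)
        (φ1.codRestrict (LinearMap.range j) hrange m)
      have h3 : ((LinearEquiv.ofInjective j hjinj) (φ m) : B) = j (φ m) := rfl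
      rw [← h3, hφdef]
      simp only [LinearMap.comp_apply, LinearEquiv.coe_coe]
      rw [h2]
      rfl
    have hφ0m : φ0 m = (tn K n) ^ (n - 1) := by
      rw [hφ0def]
      simp only [LinearMap.comp_apply, LinearMap.coe_restrictScalars]
      exact hψx
    have hφ1m : φ1 m = (b : A) • ((tn K n) ^ (n - 1)) := by
      rw [hφ1def]
      simp only [LinearMap.smul_apply]
      rw [hφ0m]
    have hne : φ1 m ≠ 0 := by
      rw [hφ1m]
      intro h
      have hu := IsLocalization.map_units B b
      rw [Algebra.smul_def] at h
      exact hτ (hu.mul_right_eq_zero.mp h)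
    have hφm0 : φ m ≠ 0 := fun h => hne (by rw [← hφm, h, j.map_zero])
    apply hφm0
    rw [LinearMap.mem_ker] at hm
    have := LinearMap.congr_fun hm φ
    simpa [Module.Dual.eval_apply] using this
  · -- torsion ⊆ ker
    intro m hm
    obtain ⟨s, hs⟩ := (Submodule.mem_torsion_iff m).mp hm
    rw [LinearMap.mem_ker]
    apply LinearMap.ext
    intro φ
    have h1 : (s : A) * φ m = 0 := by
      rw [← smul_eq_mul, ← φ.map_smul, show (s : A) • m = 0 from hs, φ.map_zero]
    have h2 : φ m = 0 := (mem_nonZeroDivisors_iff_right.mp s.2) _ (by rwa [mul_comm] at h1)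
    simp [Module.Dual.eval_apply, h2]
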